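/- For every (a,b) ∈ ℤ² and every i ∈ ℤ, the rational function (γ*_X)ⁱ 𝕀(a,b) is a Laurent polynomial in X, Y with nonnegative integer coefficients. -/

import Mathlib

noncomputable section

/-- The field ℚ(X,Y) of rational functions in two variables. -/
abbrev RatField : Type := FractionRing (MvPolynomial (Fin 2) ℚ)

noncomputable def Xv : RatField :=
  algebraMap (MvPolynomial (Fin 2) ℚ) RatField (MvPolynomial.X 0)

noncomputable def Yv : RatField :=
  algebraMap (MvPolynomial (Fin 2) ℚ) RatField (MvPolynomial.X 1)

/-- The canonical function 𝕀(a,b), defined piecewise over the five cones. -/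
noncomputable def Ican (a b : ℤ) : RatField :=
  if a ≤ 0 ∧ 0 ≤ b then Xv ^ a * Yv ^ b
  else if a ≤ 0 ∧ b ≤ 0 then ((1 + Xv) / (Xv * Yv)) ^ (-b) * Xv ^ a
  else if 0 ≤ a ∧ b ≤ 0 then
    ((1 + Xv + Xv * Yv) / Yv) ^ a * ((1 + Xv) / (Xv * Yv)) ^ (-b)
  else if 0 ≤ b ∧ b ≤ a then
    ((1 + Yv) * Xv) ^ b * ((1 + Xv + Xv * Yv) / Yv) ^ (a - b)
  else Yv ^ (b - a) * ((1 + Yv) * Xv) ^ a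

lemma poly_ne_zero_of_eval (p : MvPolynomial (Fin 2) ℚ)
    (h : MvPolynomial.eval (fun _ => (1:ℚ)) p ≠ 0) : p ≠ 0 := fun hp => by
  simp [hp] at h

lemma alg_ne_zero (p : MvPolynomial (Fin 2) ℚ)
    (h : MvPolynomial.eval (fun _ => (1:ℚ)) p ≠ 0) :
    algebraMap (MvPolynomial (Fin 2) ℚ) RatField p ≠ 0 := by
  rw [map_ne_zero_iff _ (IsFractionRing.injective (MvPolynomial (Fin 2) ℚ) RatField)]
  exact poly_ne_zero_of_eval p h

lemma hX0 : Xv ≠ 0 := alg_ne_zero _ (by norm_num)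
lemma hY0 : Yv ≠ 0 := alg_ne_zero _ (by norm_num)
lemma h1X : (1 : RatField) + Xv ≠ 0 := by
  have := alg_ne_zero (1 + MvPolynomial.X 0) (by norm_num)
  rwa [map_add, map_one] at this
lemma h1Y : (1 : RatField) + Yv ≠ 0 := by
  have := alg_ne_zero (1 + MvPolynomial.X 1) (by norm_num)
  rwa [map_add, map_one] at this
lemma h1XY : (1 : RatField) + Xv + Xv * Yv ≠ 0 := by
  have := alg_ne_zero (1 + MvPolynomial.X 0 + MvPolynomial.X 0 * MvPolynomial.X 1) (by norm_num)
  rwa [map_add, map_add, map_one, map_mul] at this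

-- cone formula lemmas
lemma Ican1 {a b : ℤ} (ha : a ≤ 0) (hb : 0 ≤ b) : Ican a b = Xv ^ a * Yv ^ b := by
  rw [Ican, if_pos ⟨ha, hb⟩]

lemma Ican2 {a b : ℤ} (ha : a ≤ 0) (hb : b ≤ 0) :
    Ican a b = ((1 + Xv) / (Xv * Yv)) ^ (-b) * Xv ^ a := by
  rw [Ican]
  split_ifs with h1 h2 h3 h4
  · have : b = 0 := le_antisymm hb h1.2
    subst this; simp
  · rfl
  · omega
  · omega
  · omega

lemma Ican3 {a b : ℤ} (ha : 0 ≤ a) (hb : b ≤ 0) :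
    Ican a b = ((1 + Xv + Xv * Yv) / Yv) ^ a * ((1 + Xv) / (Xv * Yv)) ^ (-b) := by
  rw [Ican]
  split_ifs with h1 h2
  · have ha0 : a = 0 := le_antisymm h1.1 ha
    have hb0 : b = 0 := le_antisymm hb h1.2
    subst ha0; subst hb0; simp
  · have ha0 : a = 0 := le_antisymm h2.1 ha
    subst ha0; simp
  · rfl
  · omega
  · omega

lemma Ican4 {a b : ℤ} (hb : 0 ≤ b) (hba : b ≤ a) :
    Ican a b = ((1 + Yv) * Xv) ^ b * ((1 + Xv + Xv * Yv) / Yv) ^ (a - b) := by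
  rw [Ican]
  split_ifs with h1 h2 h3 h4
  · have ha0 : a = 0 := le_antisymm h1.1 (hb.trans hba)
    have hb0 : b = 0 := le_antisymm (ha0 ▸ hba) hb
    subst ha0; subst hb0; simp
  · exfalso; omega
  · have hb0 : b = 0 := le_antisymm h3.2 hb
    subst hb0; simp
  · rfl
  · omega

lemma Ican5 {a b : ℤ} (ha : 0 ≤ a) (hab : a ≤ b) :
    Ican a b = Yv ^ (b - a) * ((1 + Yv) * Xv) ^ a := by
  rw [Ican]
  split_ifs with h1 h2 h3 h4
  · have ha0 : a = 0 := le_antisymm h1.1 ha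
    subst ha0; simp
  · exfalso; omega
  · have hb0 : b = 0 := le_antisymm h3.2 (ha.trans hab)
    have ha0 : a = 0 := le_antisymm (hb0 ▸ hab) ha
    subst ha0; subst hb0; simp
  · have hab0 : a = b := le_antisymm hab h4.2
    subst hab0; simp
  · rfl

section gamma
variable (γ : RingAut RatField) (hγX : γ Xv = Yv⁻¹) (hγY : γ Yv = (1 + Yv) * Xv)

include hγX hγY

lemma hg3 : γ ((1 + Xv) / (Xv * Yv)) = Xv⁻¹ := by
  rw [map_div₀, map_mul, map_add, map_one, hγX, hγY]
  rw [div_eq_iff (mul_ne_zero (inv_ne_zero hY0) (mul_ne_zero h1Y hX0))]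
  field_simp [hX0, hY0]
  ring

lemma hg4 : γ ((1 + Xv + Xv * Yv) / Yv) = (1 + Xv) / (Xv * Yv) := by
  rw [map_div₀, map_add, map_add, map_one, map_mul, hγX, hγY]
  have h := h1Y
  field_simp [hX0, hY0]
  ring

lemma hg5 : γ ((1 + Yv) * Xv) = (1 + Xv + Xv * Yv) / Yv := by
  rw [map_mul, map_add, map_one, hγX, hγY]
  field_simp [hY0]
  ring


lemma step (a b : ℤ) : γ (Ican a b) = Ican b (if b ≤ 0 then -a else b - a) := by
  rcases le_total a 0 with ha | ha
  · rcases le_total b 0 with hb | hb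
    · -- cone 2
      rw [Ican2 ha hb, map_mul, map_zpow₀, map_zpow₀, hγX, hg3 γ hγX hγY,
        if_pos hb, Ican1 hb (by omega), inv_zpow, inv_zpow, ← zpow_neg, ← zpow_neg, neg_neg]
    · -- cone 1
      rw [Ican1 ha hb, map_mul, map_zpow₀, map_zpow₀, hγX, hγY,
        show (if b ≤ 0 then -a else b - a) = b - a by split <;> omega,
        Ican5 hb (by omega), show b - a - b = -a from by ring, inv_zpow, ← zpow_neg]
  · rcases le_total b 0 with hb | hb
    · -- cone 3
      rw [Ican3 ha hb, map_mul, map_zpow₀, map_zpow₀, hg4 γ hγX hγY, hg3 γ hγX hγY,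
        if_pos hb, Ican2 hb (by omega), inv_zpow, ← zpow_neg, neg_neg, neg_neg]
    · rcases le_total b a with hba | hba
      · -- cone 4
        rw [Ican4 hb hba, map_mul, map_zpow₀, map_zpow₀, hg5 γ hγX hγY, hg4 γ hγX hγY,
          show (if b ≤ 0 then -a else b - a) = b - a by split <;> omega,
          Ican3 hb (by omega), neg_sub]
      · -- cone 5
        rw [Ican5 ha hba, map_mul, map_zpow₀, map_zpow₀, hγY, hg5 γ hγX hγY,
          show (if b ≤ 0 then -a else b - a) = b - a by split <;> omega,
          Ican4 (by omega) (by omega : b - a ≤ b), show b - (b - a) = a from by ring]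

end gamma

section pos

abbrev S : Subsemiring RatField := Subsemiring.closure {Xv, Xv⁻¹, Yv, Yv⁻¹}

lemma hXm : Xv ∈ S := Subsemiring.subset_closure (by simp)
lemma hXim : Xv⁻¹ ∈ S := Subsemiring.subset_closure (by simp)
lemma hYm : Yv ∈ S := Subsemiring.subset_closure (by simp)
lemma hYim : Yv⁻¹ ∈ S := Subsemiring.subset_closure (by simp)

lemma zpow_mem_of_nonneg {x : RatField} (hx : x ∈ S) {n : ℤ} (hn : 0 ≤ n) : x ^ n ∈ S := by
  lift n to ℕ using hn
  rw [zpow_natCast]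
  exact pow_mem hx n

lemma Xpow_mem (a : ℤ) : Xv ^ a ∈ S := by
  rcases le_total a 0 with ha | ha
  · have h : Xv ^ a = Xv⁻¹ ^ (-a) := by rw [inv_zpow, ← zpow_neg, neg_neg]
    rw [h]; exact zpow_mem_of_nonneg hXim (by omega)
  · exact zpow_mem_of_nonneg hXm ha

lemma Ypow_mem (b : ℤ) : Yv ^ b ∈ S := by
  rcases le_total b 0 with hb | hb
  · have h : Yv ^ b = Yv⁻¹ ^ (-b) := by rw [inv_zpow, ← zpow_neg, neg_neg]
    rw [h]; exact zpow_mem_of_nonneg hYim (by omega)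
  · exact zpow_mem_of_nonneg hYm hb

lemma g3_mem : (1 + Xv) / (Xv * Yv) ∈ S := by
  have h : (1 + Xv) / (Xv * Yv) = Xv⁻¹ * Yv⁻¹ + Yv⁻¹ := by
    have h1 := hX0; have h2 := hY0
    field_simp
  rw [h]
  exact add_mem (mul_mem hXim hYim) hYim

lemma g4_mem : (1 + Xv + Xv * Yv) / Yv ∈ S := by
  have h : (1 + Xv + Xv * Yv) / Yv = Yv⁻¹ + Xv * Yv⁻¹ + Xv := by
    have h1 := hX0; have h2 := hY0
    field_simp
  rw [h]
  exact add_mem (add_mem hYim (mul_mem hXm hYim)) hXm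

lemma g5_mem : (1 + Yv) * Xv ∈ S := by
  have h : (1 + Yv) * Xv = Xv + Yv * Xv := by ring
  rw [h]
  exact add_mem hXm (mul_mem hYm hXm)

lemma Ican_mem (a b : ℤ) : Ican a b ∈ S := by
  rcases le_total a 0 with ha | ha
  · rcases le_total b 0 with hb | hb
    · rw [Ican2 ha hb]
      exact mul_mem (zpow_mem_of_nonneg g3_mem (by omega)) (Xpow_mem a)
    · rw [Ican1 ha hb]
      exact mul_mem (Xpow_mem a) (Ypow_mem b)
  · rcases le_total b 0 with hb | hb
    · rw [Ican3 ha hb]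
      exact mul_mem (zpow_mem_of_nonneg g4_mem ha) (zpow_mem_of_nonneg g3_mem (by omega))
    · rcases le_total b a with hba | hba
      · rw [Ican4 hb hba]
        exact mul_mem (zpow_mem_of_nonneg g5_mem hb) (zpow_mem_of_nonneg g4_mem (by omega))
      · rw [Ican5 ha hba]
        exact mul_mem (zpow_mem_of_nonneg hYm (by omega)) (zpow_mem_of_nonneg g5_mem ha)

end pos


/-- For every (a,b) ∈ ℤ² and every i ∈ ℤ, (γ*)ⁱ 𝕀(a,b) is a Laurent polynomial in X, Y
with nonnegative integer coefficients, i.e. lies in the subsemiring generated by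
X, X⁻¹, Y, Y⁻¹. -/
theorem canonical_map_universally_positive
    (γ : RingAut RatField)
    (hγX : γ Xv = Yv⁻¹)
    (hγY : γ Yv = (1 + Yv) * Xv) :
    ∀ (i : ℤ) (a b : ℤ),
      (γ ^ i) (Ican a b) ∈ Subsemiring.closure {Xv, Xv⁻¹, Yv, Yv⁻¹} := by
  intro i
  induction i using Int.induction_on with
  | zero => intro a b; simpa using Ican_mem a b
  | succ n ih =>
    intro a b
    have h1 : (γ ^ ((n : ℤ) + 1)) (Ican a b) = (γ ^ (n : ℤ)) (γ (Ican a b)) := by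
      rw [zpow_add_one]; rfl
    rw [h1, step γ hγX hγY]
    exact ih _ _
  | pred n ih =>
    intro a b
    have h1 : (γ ^ (-(n : ℤ) - 1)) (Ican a b) = (γ ^ (-(n : ℤ))) (γ⁻¹ (Ican a b)) := by
      rw [zpow_sub_one]; rfl
    have h3 : (if a ≤ 0 then -(if a ≤ 0 then -b else a - b)
        else a - (if a ≤ 0 then -b else a - b)) = b := by
      split_ifs <;> omega
    have h4 : γ (Ican (if a ≤ 0 then -b else a - b) a) = Ican a b := by
      rw [step γ hγX hγY, h3]
    have h2 : γ⁻¹ (Ican a b) = Ican (if a ≤ 0 then -b else a - b) a := by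
      rw [← h4]
      exact γ.symm_apply_apply _
    rw [h1, h2]
    exact ih _ _

end
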